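/- arXiv:2206.08818 — 8 statements merged into one kernel-verified Lean document; each statement's English description precedes it below -/
import Mathlib

section
/- Let V be a finite-dimensional real normed vector space and γ ⊆ V a closed proper convex cone with nonempty interior. For every v in the interior of the antipodal cone γ^a = −γ, the set B_v := (v + γ) ∩ (−v + γ^a) is convex, closed, bounded, symmetric (that is, −B_v = B_v), and 0 belongs to the interior of B_v. -/
open Pointwise

/-- The set `B_v = (v + γ) ∩ (-v + γ^a)` where `γ^a = -γ`. -/
def coneBall {V : Type*} [AddGroup V] (γ : Set V) (v : V) : Set V :=
  (v +ᵥ γ) ∩ ((-v) +ᵥ (-γ))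

lemma vadd_eq_preimage {V : Type*} [AddCommGroup V] (a : V) (s : Set V) :
    a +ᵥ s = (fun x => -a + x) ⁻¹' s := by
  ext x
  simp [Set.mem_vadd_set_iff_neg_vadd_mem]

/-- for `γ` a closed proper convex cone with nonempty interior in a
finite-dimensional real normed vector space and `v ∈ interior (-γ)`, the set
`B_v = (v + γ) ∩ (-v + γ^a)` is convex, closed, bounded, symmetric, and `0` lies in
its interior. -/
theorem coneBall_convex_isClosed_isBounded_symmetric_zero_mem_interior
    {V : Type*} [NormedAddCommGroup V] [NormedSpace ℝ V] [FiniteDimensional ℝ V]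
    (γ : Set V) (hzero : (0 : V) ∈ γ)
    (hsmul : ∀ t : ℝ, 0 < t → t • γ ⊆ γ)
    (hconv : Convex ℝ γ)
    (hproper : γ ∩ (-γ) = {0})
    (hclosed : IsClosed γ)
    (hint : (interior γ).Nonempty)
    (v : V) (hv : v ∈ interior (-γ)) :
    Convex ℝ (coneBall γ v) ∧
    IsClosed (coneBall γ v) ∧
    Bornology.IsBounded (coneBall γ v) ∧
    -(coneBall γ v) = coneBall γ v ∧
    (0 : V) ∈ interior (coneBall γ v) := by
  have h1 : v +ᵥ γ = (fun x => -v + x) ⁻¹' γ := vadd_eq_preimage v γ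
  have h2 : (-v) +ᵥ (-γ) = (fun x => v + x) ⁻¹' (-γ) := by
    rw [vadd_eq_preimage]; simp
  refine ⟨?_, ?_, ?_, ?_, ?_⟩
  · exact (hconv.vadd v).inter (hconv.neg.vadd (-v))
  · rw [coneBall, h1, h2]
    exact (hclosed.preimage (continuous_const.add continuous_id)).inter
      (hclosed.neg.preimage (continuous_const.add continuous_id))
  · -- boundedness
    by_contra hb
    rw [isBounded_iff_forall_norm_le] at hb
    push_neg at hb
    choose x hx hnx using fun n : ℕ => hb (n + 1)
    have hxpos : ∀ n : ℕ, (0 : ℝ) < ‖x n‖ := fun n =>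
      lt_of_le_of_lt (by positivity) (hnx n)
    set u : ℕ → V := fun n => ‖x n‖⁻¹ • x n with hu
    have husphere : ∀ n, u n ∈ Metric.sphere (0 : V) 1 := by
      intro n
      simp [hu, norm_smul, abs_of_pos (inv_pos.2 (hxpos n)),
        inv_mul_cancel₀ (hxpos n).ne']
    obtain ⟨w, hw, φ, hφ, hwt⟩ :=
      (isCompact_sphere (0 : V) 1).tendsto_subseq husphere
    have hinv0 : Filter.Tendsto (fun n => ‖x (φ n)‖⁻¹) Filter.atTop (nhds 0) := by
      apply tendsto_inv_atTop_zero.comp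
      have hmono : ∀ n : ℕ, (n : ℝ) ≤ ‖x (φ n)‖ := by
        intro n
        have h1 : (n : ℝ) ≤ (φ n : ℝ) := by exact_mod_cast hφ.id_le n
        have h2 := hnx (φ n)
        push_cast at h2 ⊢
        linarith
      exact Filter.tendsto_atTop_mono hmono tendsto_natCast_atTop_atTop
    have hγmem : ∀ n, u (φ n) - ‖x (φ n)‖⁻¹ • v ∈ γ := by
      intro n
      have hxmem : x (φ n) - v ∈ γ := by
        obtain ⟨g, hg, hgeq⟩ := (hx (φ n)).1
        simp only [vadd_eq_add] at hgeq
        rwa [← hgeq, add_sub_cancel_left]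
      have := hsmul _ (inv_pos.2 (hxpos (φ n))) ⟨_, hxmem, rfl⟩
      simpa only [smul_sub] using this
    have hγmem' : ∀ n, -u (φ n) - ‖x (φ n)‖⁻¹ • v ∈ γ := by
      intro n
      have hxmem : -x (φ n) - v ∈ γ := by
        obtain ⟨g, hg, hgeq⟩ := (hx (φ n)).2
        simp only [vadd_eq_add] at hgeq
        have h' : -x (φ n) - v = -g := by rw [← hgeq]; abel
        rw [h']
        exact Set.mem_neg.mp hg
      have := hsmul _ (inv_pos.2 (hxpos (φ n))) ⟨_, hxmem, rfl⟩
      simpa only [smul_sub, smul_neg] using this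
    have h0 : Filter.Tendsto (fun n => ‖x (φ n)‖⁻¹ • v) Filter.atTop (nhds 0) := by
      simpa using hinv0.smul_const v
    have hwγ : w ∈ γ := by
      have ht : Filter.Tendsto (fun n => u (φ n) - ‖x (φ n)‖⁻¹ • v) Filter.atTop (nhds w) := by
        simpa using hwt.sub h0
      exact hclosed.mem_of_tendsto ht (Filter.Eventually.of_forall hγmem)
    have hwγ' : -w ∈ γ := by
      have ht : Filter.Tendsto (fun n => -u (φ n) - ‖x (φ n)‖⁻¹ • v) Filter.atTop (nhds (-w)) := by
        simpa using (hwt.neg).sub h0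
      exact hclosed.mem_of_tendsto ht (Filter.Eventually.of_forall hγmem')
    have : w ∈ γ ∩ (-γ) := ⟨hwγ, by simpa using hwγ'⟩
    rw [hproper] at this
    simp only [Set.mem_singleton_iff] at this
    rw [this] at hw
    simp at hw
  · -- symmetry
    have : ∀ (a : V) (s : Set V), -(a +ᵥ s) = (-a) +ᵥ (-s) := by
      intro a s
      ext x
      simp only [Set.mem_neg, Set.mem_vadd_set, vadd_eq_add]
      constructor
      · rintro ⟨g, hg, hgeq⟩
        exact ⟨-g, Set.neg_mem_neg.2 hg, by rw [← neg_add, hgeq, neg_neg]⟩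
      · rintro ⟨g, hg, rfl⟩
        exact ⟨-g, by simpa using hg, by abel⟩
    rw [coneBall, Set.inter_neg, this, this]
    simp [Set.inter_comm]
  · -- 0 in interior
    rw [coneBall, interior_inter]
    constructor
    · rw [h1]
      have hsub : (fun x => -v + x) ⁻¹' interior γ ⊆ interior ((fun x => -v + x) ⁻¹' γ) :=
        interior_maximal (Set.preimage_mono interior_subset)
          (isOpen_interior.preimage (continuous_const.add continuous_id))
      apply hsub
      have hneg : (fun x : V => -x) ⁻¹' interior (-γ) ⊆ interior ((fun x : V => -x) ⁻¹' (-γ)) :=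
        interior_maximal (Set.preimage_mono interior_subset)
          (isOpen_interior.preimage continuous_neg)
      have hpre : (fun x : V => -x) ⁻¹' (-γ) = γ := by ext x; simp
      rw [hpre] at hneg
      have : -v ∈ interior γ := hneg (by simpa using hv)
      simpa using this
    · rw [h2]
      have hsub : (fun x => v + x) ⁻¹' interior (-γ) ⊆ interior ((fun x => v + x) ⁻¹' (-γ)) :=
        interior_maximal (Set.preimage_mono interior_subset)
          (isOpen_interior.preimage (continuous_const.add continuous_id))
      apply hsub
      simpa using hv
end

section
/- Let V be a finite-dimensional real normed vector space, γ ⊆ V a closed proper convex cone with nonempty interior, v an element of the interior of γ^a = −γ, and B_v := (v + γ) ∩ (−v + γ^a). Then the gauge of B_v is a norm on V whose closed unit ball is B_v; precisely, for all x, y ∈ V and c ∈ ℝ: gauge_{B_v}(x) ≥ 0; gauge_{B_v}(x) = 0 if and only if x = 0; gauge_{B_v}(c • x) = |c| · gauge_{B_v}(x); gauge_{B_v}(x + y) ≤ gauge_{B_v}(x) + gauge_{B_v}(y); and {x ∈ V : gauge_{B_v}(x) ≤ 1} = B_v. -/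
open Pointwise

/-- the gauge (Minkowski functional) of `B_v = (v + γ) ∩ (-v + γ^a)` is a
norm on `V` whose closed unit ball is `B_v`. -/
theorem gauge_coneBall_is_norm
    {V : Type*} [NormedAddCommGroup V] [NormedSpace ℝ V] [FiniteDimensional ℝ V]
    (γ : Set V) (hzero : (0 : V) ∈ γ)
    (hsmul : ∀ t : ℝ, 0 < t → t • γ ⊆ γ)
    (hconv : Convex ℝ γ)
    (hproper : γ ∩ (-γ) = {0})
    (hclosed : IsClosed γ)
    (hint : (interior γ).Nonempty)
    (v : V) (hv : v ∈ interior (-γ)) :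
    (∀ x : V, 0 ≤ gauge (coneBall γ v) x) ∧
    (∀ x : V, gauge (coneBall γ v) x = 0 ↔ x = 0) ∧
    (∀ (c : ℝ) (x : V), gauge (coneBall γ v) (c • x) = |c| * gauge (coneBall γ v) x) ∧
    (∀ x y : V, gauge (coneBall γ v) (x + y) ≤ gauge (coneBall γ v) x + gauge (coneBall γ v) y) ∧
    {x : V | gauge (coneBall γ v) x ≤ 1} = coneBall γ v := by
  -- membership description
  have memB : ∀ x : V, x ∈ coneBall γ v ↔ (-v + x ∈ γ ∧ -(v + x) ∈ γ) := by
    intro x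
    simp only [coneBall, Set.mem_inter_iff, Set.mem_vadd_set_iff_neg_vadd_mem, vadd_eq_add,
      Set.mem_neg, neg_neg]
  -- convexity
  have hBconv : Convex ℝ (coneBall γ v) := (hconv.vadd v).inter (hconv.neg.vadd (-v))
  -- closedness
  have hBclosed : IsClosed (coneBall γ v) := (hclosed.vadd v).inter (hclosed.neg.vadd (-v))
  -- symmetry
  have hBsymm : ∀ ⦃x : V⦄, x ∈ coneBall γ v → -x ∈ coneBall γ v := by
    intro x hx
    rw [memB] at hx ⊢
    refine ⟨?_, ?_⟩
    · have := hx.2; convert this using 1; abel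
    · have := hx.1; convert this using 1; abel
  -- neighborhood of zero
  have h1 : -γ ∈ nhds v := mem_interior_iff_mem_nhds.1 hv
  have h2 : γ ∈ nhds (-v) := by
    have : Neg.neg ⁻¹' (-γ) ∈ nhds (-v) :=
      (continuous_neg.continuousAt).preimage_mem_nhds (by simpa using h1)
    simpa [Set.neg_preimage, neg_neg] using this
  have hBnhds : coneBall γ v ∈ nhds (0 : V) := by
    refine Filter.inter_mem ?_ ?_
    · have := vadd_mem_nhds_vadd v h2; simpa using this
    · have := vadd_mem_nhds_vadd (-v) h1; simpa using this
  have hBabs : Absorbent ℝ (coneBall γ v) := absorbent_nhds_zero hBnhds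
  have hBbal : Balanced ℝ (coneBall γ v) := (balanced_iff_neg_mem hBconv).2 hBsymm
  -- boundedness
  have hBbd : Bornology.IsVonNBounded ℝ (coneBall γ v) := by
    rw [NormedSpace.isVonNBounded_iff]
    rw [isBounded_iff_forall_norm_le]
    by_contra h
    push_neg at h
    choose x hxB hxn using fun n : ℕ => h n
    have hx0 : ∀ n : ℕ, 0 < ‖x n‖ := fun n => lt_of_le_of_lt (Nat.cast_nonneg n) (hxn n)
    set u : ℕ → V := fun n => ‖x n‖⁻¹ • x n with hu_def
    have hu : ∀ n, u n ∈ Metric.sphere (0 : V) 1 := by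
      intro n
      simp [u, norm_smul, abs_of_pos (inv_pos.2 (hx0 n)),
        inv_mul_cancel₀ (hx0 n).ne']
    obtain ⟨u₀, hu₀, φ, hφ, hconv'⟩ := (isCompact_sphere (0 : V) 1).tendsto_subseq hu
    have hnorm : Filter.Tendsto (fun n => ‖x (φ n)‖) Filter.atTop Filter.atTop :=
      Filter.tendsto_atTop_mono
        (fun n => le_of_lt (lt_of_le_of_lt (Nat.cast_le.2 hφ.le_apply) (hxn (φ n))))
        tendsto_natCast_atTop_atTop
    have hinv : Filter.Tendsto (fun n => ‖x (φ n)‖⁻¹) Filter.atTop (nhds 0) :=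
      hnorm.inv_tendsto_atTop
    have hvlim : Filter.Tendsto (fun n => ‖x (φ n)‖⁻¹ • v) Filter.atTop (nhds (0 : V)) := by
      simpa using hinv.smul_const v
    have hmem1 : ∀ n, u (φ n) - ‖x (φ n)‖⁻¹ • v ∈ γ := by
      intro n
      have h1' : -v + x (φ n) ∈ γ := ((memB _).1 (hxB (φ n))).1
      have := hsmul _ (inv_pos.2 (hx0 (φ n))) (Set.smul_mem_smul_set h1')
      convert this using 1
      simp only [u, smul_add, smul_neg]
      abel
    have hmem2 : ∀ n, -u (φ n) - ‖x (φ n)‖⁻¹ • v ∈ γ := by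
      intro n
      have h2' : -(v + x (φ n)) ∈ γ := ((memB _).1 (hxB (φ n))).2
      have := hsmul _ (inv_pos.2 (hx0 (φ n))) (Set.smul_mem_smul_set h2')
      convert this using 1
      simp only [u, smul_add, smul_neg, neg_add]
      abel
    have hγ1 : u₀ ∈ γ := by
      have ht : Filter.Tendsto (fun n => u (φ n) - ‖x (φ n)‖⁻¹ • v) Filter.atTop (nhds u₀) := by
        simpa using hconv'.sub hvlim
      exact hclosed.mem_of_tendsto ht (Filter.Eventually.of_forall hmem1)
    have hγ2 : -u₀ ∈ γ := by
      have ht : Filter.Tendsto (fun n => -u (φ n) - ‖x (φ n)‖⁻¹ • v) Filter.atTop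
          (nhds (-u₀)) := by
        simpa using hconv'.neg.sub hvlim
      exact hclosed.mem_of_tendsto ht (Filter.Eventually.of_forall hmem2)
    have hu0 : u₀ = 0 := by
      have : u₀ ∈ γ ∩ (-γ) := ⟨hγ1, Set.mem_neg.2 hγ2⟩
      rw [hproper] at this
      exact this
    have : ‖u₀‖ = 1 := by simpa using hu₀
    rw [hu0] at this
    simp at this
  refine ⟨fun x => gauge_nonneg x, fun x => gauge_eq_zero hBabs hBbd,
    fun c x => by rw [gauge_smul hBbal, Real.norm_eq_abs],
    gauge_add_le hBconv hBabs, ?_⟩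
  ext x
  simp only [Set.mem_setOf_eq]
  rw [gauge_le_one_iff_mem_closure hBconv hBnhds, hBclosed.closure_eq]
end

section
/- Fix an integer n ≥ 1 and h ∈ ℝⁿ with h_i > 0 for every i, and let γ = (−∞,0]ⁿ. The topological frontier of γ in ℝⁿ is ∂γ = {z ∈ ℝⁿ : z_i ≤ 0 for all i, and z_i = 0 for some i}, and for every s ∈ ℝ the fiber of the push function over y = s • h is p_{L_h}⁻¹({y}) = y + ∂γ. -/
open Pointwise

/-- The push function `p_{L_h}(x) = (max_i x_i / h_i) • h` onto the line `L_h = ℝ • h`. -/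
noncomputable def pushFn (n : ℕ) (h : Fin n → ℝ) (x : Fin n → ℝ) : Fin n → ℝ :=
  (⨆ i, x i / h i) • h

lemma frontier_orthant_aux (n : ℕ) :
    frontier {x : Fin n → ℝ | ∀ i, x i ≤ 0}
        = {z : Fin n → ℝ | (∀ i, z i ≤ 0) ∧ ∃ i, z i = 0} := by
  have hset : {x : Fin n → ℝ | ∀ i, x i ≤ 0}
      = Set.pi Set.univ (fun _ : Fin n => Set.Iic (0 : ℝ)) := by
    ext x; simp [Set.mem_pi, Set.mem_Iic, Pi.le_def]
  rw [hset, frontier, closure_pi_set, interior_pi_set Set.finite_univ]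
  ext z
  simp only [Set.mem_diff, Set.mem_pi, Set.mem_univ, forall_true_left, Set.mem_setOf_eq,
    closure_Iic, interior_Iic, Set.mem_Iic, Set.mem_Iio, not_forall, not_lt, true_implies]
  constructor
  · rintro ⟨hle, i, hi⟩
    exact ⟨hle, i, le_antisymm (hle i) hi⟩
  · rintro ⟨hle, i, hi⟩
    exact ⟨hle, i, hi.ge⟩

/-- the topological frontier of `γ = (-∞,0]ⁿ` in `ℝⁿ` is
`∂γ = {z : z_i ≤ 0 for all i, and z_i = 0 for some i}`, and for every `s ∈ ℝ` the fiber of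
the push function over `y = s • h` is `p_{L_h}⁻¹({y}) = y + ∂γ`. -/
theorem frontier_orthant_and_pushFn_fiber
    (n : ℕ) (hn : 1 ≤ n) (h : Fin n → ℝ) (hpos : ∀ i, 0 < h i) (s : ℝ) :
    (frontier {x : Fin n → ℝ | ∀ i, x i ≤ 0}
        = {z : Fin n → ℝ | (∀ i, z i ≤ 0) ∧ ∃ i, z i = 0}) ∧
    (pushFn n h ⁻¹' {s • h}
        = (s • h) +ᵥ frontier {x : Fin n → ℝ | ∀ i, x i ≤ 0}) := by
  have hfr := frontier_orthant_aux n
  refine ⟨hfr, ?_⟩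
  have hne : Nonempty (Fin n) := ⟨⟨0, hn⟩⟩
  rw [hfr]
  ext x
  simp only [Set.mem_preimage, Set.mem_singleton_iff, pushFn]
  constructor
  · intro hx
    have hsup : (⨆ i, x i / h i) = s := by
      obtain ⟨i⟩ := hne
      have := congrFun hx i
      simp only [Pi.smul_apply, smul_eq_mul] at this
      exact mul_right_cancel₀ (hpos i).ne' this
    -- sup is attained
    obtain ⟨j, hj⟩ := Finite.exists_max (fun i => x i / h i)
    have hjs : x j / h j = s := by
      rw [← hsup]
      exact le_antisymm (le_ciSup (f := fun i => x i / h i) (Set.Finite.bddAbove (Set.finite_range _)) j) (ciSup_le hj)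
    refine ⟨x - s • h, ⟨fun i => ?_, ⟨j, ?_⟩⟩, by simp⟩
    · have : x i / h i ≤ s := hsup ▸ le_ciSup (f := fun i => x i / h i) (Set.Finite.bddAbove (Set.finite_range _)) i
      have := (div_le_iff₀ (hpos i)).mp this
      simpa [sub_nonpos] using this
    · have := (div_eq_iff (hpos j).ne').mp hjs
      simp [this]
  · rintro ⟨z, ⟨hle, j, hj⟩, rfl⟩
    simp only [vadd_eq_add]
    have hsup : (⨆ i, (s • h + z) i / h i) = s := by
      apply le_antisymm
      · apply ciSup_le
        intro i
        have : s • h i + z i ≤ s * h i := by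
          have := hle i; simp only [Pi.smul_apply, smul_eq_mul]; linarith
        rw [div_le_iff₀ (hpos i)]
        simpa using this
      · have : (s • h + z) j / h j = s := by
          simp [hj, mul_div_assoc, div_self (hpos j).ne']
        exact le_trans (le_of_eq this.symm)
          (le_ciSup (f := fun i => (s • h + z) i / h i) (Set.Finite.bddAbove (Set.finite_range _)) j)
    rw [hsup]
end

section
/- Fix an integer n ≥ 1 and h ∈ ℝⁿ with h_i > 0 for every i and max_i h_i = 1. Then the push function p_{L_h} is Lipschitz with constant 1/(min_i h_i) with respect to the sup norm ‖x‖_∞ = max_i |x_i|, and this constant is optimal: there exist x ≠ x′ in ℝⁿ with ‖p_{L_h}(x) − p_{L_h}(x′)‖_∞ = (1/(min_i h_i)) · ‖x − x′‖_∞ (for instance x = e_{i₀} the i₀-th standard basis vector where h_{i₀} = min_i h_i, and x′ = 0). -/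
/-- for `h` with positive coordinates and `max_i h_i = 1`, the push function
`p_{L_h}` is `1/(min_i h_i)`-Lipschitz for the sup norm (the norm of `Fin n → ℝ`), and this
constant is optimal: it is attained at some pair `x ≠ x'`. -/
theorem pushFn_lipschitz_and_optimal
    (n : ℕ) (hn : 1 ≤ n) (h : Fin n → ℝ) (hpos : ∀ i, 0 < h i)
    (hmax : (⨆ i, h i) = 1) :
    (∀ x x' : Fin n → ℝ,
      ‖pushFn n h x - pushFn n h x'‖ ≤ (1 / ⨅ i, h i) * ‖x - x'‖) ∧
    (∃ x x' : Fin n → ℝ, x ≠ x' ∧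
      ‖pushFn n h x - pushFn n h x'‖ = (1 / ⨅ i, h i) * ‖x - x'‖) := by
  haveI : Nonempty (Fin n) := ⟨⟨0, hn⟩⟩
  -- the min of h is attained
  obtain ⟨i₀, hi₀⟩ := Finite.exists_min h
  have hm : (⨅ i, h i) = h i₀ := by
    apply le_antisymm
    · exact ciInf_le (Set.Finite.bddBelow (Set.finite_range h)) i₀
    · exact le_ciInf hi₀
  have hm_pos : (0:ℝ) < ⨅ i, h i := hm ▸ hpos i₀
  -- ‖h‖ = 1
  have h_le_one : ∀ i, h i ≤ 1 := fun i =>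
    hmax ▸ le_ciSup (Set.Finite.bddAbove (Set.finite_range h)) i
  have hnorm : ‖h‖ = 1 := by
    apply le_antisymm
    · apply pi_norm_le_iff_of_nonneg zero_le_one |>.2
      intro i
      rw [Real.norm_eq_abs, abs_of_pos (hpos i)]
      exact h_le_one i
    · rw [← hmax]
      apply Real.iSup_le _ (norm_nonneg h)
      intro i
      calc h i ≤ |h i| := le_abs_self _
        _ ≤ ‖h‖ := norm_le_pi_norm h i
  -- Lipschitz key estimate
  have key : ∀ x x' : Fin n → ℝ,
      (⨆ i, x i / h i) - (⨆ i, x' i / h i) ≤ (1 / ⨅ i, h i) * ‖x - x'‖ := by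
    intro x x'
    rw [sub_le_iff_le_add]
    apply ciSup_le
    intro i
    have hxi : x i ≤ x' i + ‖x - x'‖ := by
      have : x i - x' i ≤ |x i - x' i| := le_abs_self _
      have h2 : |x i - x' i| ≤ ‖x - x'‖ := by
        have := norm_le_pi_norm (x - x') i
        simpa [Real.norm_eq_abs] using this
      linarith
    calc x i / h i ≤ (x' i + ‖x - x'‖) / h i :=
          div_le_div_of_nonneg_right hxi (hpos i).le
      _ = x' i / h i + ‖x - x'‖ / h i := add_div _ _ _
      _ ≤ (⨆ j, x' j / h j) + ‖x - x'‖ / (⨅ j, h j) := by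
          gcongr
          · exact le_ciSup (Set.Finite.bddAbove (Set.finite_range (fun j => x' j / h j))) i
          · exact hm ▸ hi₀ i
      _ = (1 / ⨅ j, h j) * ‖x - x'‖ + ⨆ j, x' j / h j := by ring
  constructor
  · intro x x'
    have hd : pushFn n h x - pushFn n h x' = ((⨆ i, x i / h i) - ⨆ i, x' i / h i) • h := by
      rw [sub_smul]; rfl
    rw [hd, norm_smul, Real.norm_eq_abs, hnorm, mul_one]
    rw [abs_sub_le_iff]
    constructor
    · exact key x x'
    · have := key x' x
      rwa [norm_sub_rev] at this
  · refine ⟨Pi.single i₀ 1, 0, ?_, ?_⟩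
    · intro hc
      have := congrFun hc i₀
      simp at this
    · have h0 : pushFn n h 0 = 0 := by
        unfold pushFn
        simp
      have hs : (⨆ i, (Pi.single i₀ 1 : Fin n → ℝ) i / h i) = 1 / h i₀ := by
        apply le_antisymm
        · apply ciSup_le
          intro i
          by_cases hi : i = i₀
          · subst hi; simp
          · rw [Pi.single_eq_of_ne hi, zero_div]
            exact (one_div_pos.2 (hpos i₀)).le
        · have := le_ciSup (Set.Finite.bddAbove (Set.finite_range
            (fun i => (Pi.single i₀ 1 : Fin n → ℝ) i / h i))) i₀
          simpa using this
      have hx : ‖(Pi.single i₀ 1 : Fin n → ℝ)‖ = 1 := by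
        apply le_antisymm
        · apply pi_norm_le_iff_of_nonneg zero_le_one |>.2
          intro i
          by_cases hi : i = i₀
          · subst hi; simp
          · rw [Pi.single_eq_of_ne hi]; simp
        · have := norm_le_pi_norm (Pi.single i₀ 1 : Fin n → ℝ) i₀
          simpa using this
      rw [h0, sub_zero, sub_zero, hx, mul_one]
      unfold pushFn
      rw [hs, norm_smul, Real.norm_eq_abs, hnorm, mul_one, hm]
      rw [abs_of_pos (one_div_pos.2 (hpos i₀))]
end

section
/- Let V be a nontrivial finite-dimensional real normed vector space, γ ⊆ V a closed proper convex cone with nonempty interior, and u a continuous linear functional on V lying in the interior of the polar cone γ°. Then for every real x < 0 the set {z ∈ γ : u(z) = x} is empty, and for every real x ≥ 0 the set {z ∈ γ : u(z) = x} is a nonempty compact convex subset of V. -/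
open Pointwise

/-- let `γ` be a closed proper convex cone with nonempty interior in a
nontrivial finite-dimensional real normed vector space and `u` a continuous linear
functional in the interior of the polar cone `γ°`. For `x < 0` the slice
`{z ∈ γ : u z = x}` is empty, and for `x ≥ 0` it is a nonempty compact convex subset. -/
theorem cone_slice_empty_or_nonempty_compact_convex
    {V : Type*} [NormedAddCommGroup V] [NormedSpace ℝ V] [FiniteDimensional ℝ V]
    [Nontrivial V]
    (γ : Set V) (hzero : (0 : V) ∈ γ)
    (hsmul : ∀ t : ℝ, 0 < t → t • γ ⊆ γ)
    (hconv : Convex ℝ γ)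
    (hproper : γ ∩ (-γ) = {0})
    (hclosed : IsClosed γ)
    (hint : (interior γ).Nonempty)
    (u : V →L[ℝ] ℝ)
    (hu : u ∈ interior {w : V →L[ℝ] ℝ | ∀ x ∈ γ, 0 ≤ w x}) :
    ∀ x : ℝ,
      (x < 0 → {z ∈ γ | u z = x} = ∅) ∧
      (0 ≤ x → ({z ∈ γ | u z = x}.Nonempty ∧ IsCompact {z ∈ γ | u z = x} ∧
        Convex ℝ {z ∈ γ | u z = x})) := by
  -- Extract a radius ε from the interior membership
  obtain ⟨ε, hε, hball⟩ := Metric.isOpen_iff.mp isOpen_interior u hu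
  have hball' : Metric.ball u ε ⊆ {w : V →L[ℝ] ℝ | ∀ x ∈ γ, 0 ≤ w x} :=
    hball.trans interior_subset
  -- key estimate: u z ≥ (ε/2) ‖z‖ on γ
  have key : ∀ z ∈ γ, (ε / 2) * ‖z‖ ≤ u z := by
    intro z hz
    rcases eq_or_ne z 0 with rfl | hz0
    · simp
    · obtain ⟨g, hg1, hgz⟩ := exists_dual_vector ℝ z (norm_ne_zero_iff.mpr hz0)
      have hw : u - (ε / 2) • g ∈ Metric.ball u ε := by
        rw [Metric.mem_ball, dist_eq_norm]
        have : u - (ε / 2) • g - u = -((ε / 2) • g) := by abel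
        rw [this, norm_neg, norm_smul (ε/2) g, hg1]
        simp only [mul_one, Real.norm_eq_abs, abs_of_pos (by linarith : (0:ℝ) < ε / 2)]
        linarith
      have := hball' hw z hz
      simp only [ContinuousLinearMap.sub_apply, ContinuousLinearMap.smul_apply,
        smul_eq_mul] at this
      have hgz' : g z = ‖z‖ := by exact_mod_cast hgz
      rw [hgz'] at this
      linarith
  have hnonneg : ∀ z ∈ γ, 0 ≤ u z := fun z hz =>
    le_trans (by positivity) (key z hz)
  -- find an interior point, which is nonzero
  obtain ⟨v, hv⟩ := hint
  have hv0 : v ≠ 0 := by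
    rintro rfl
    obtain ⟨r, hr, hrball⟩ := Metric.isOpen_iff.mp isOpen_interior 0 hv
    obtain ⟨a, ha⟩ := exists_ne (0 : V)
    set b := (r / (2 * ‖a‖)) • a with hb
    have hna : 0 < ‖a‖ := norm_pos_iff.mpr ha
    have hbn : ‖b‖ < r := by
      rw [hb, norm_smul, Real.norm_eq_abs, abs_of_pos (by positivity)]
      rw [div_mul_eq_mul_div, mul_comm]
      rw [div_lt_iff₀ (by positivity)]
      nlinarith
    have hb0 : b ≠ 0 := by
      rw [hb]
      exact smul_ne_zero (by positivity) ha
    have hbγ : b ∈ γ := interior_subset (hrball (by simpa [Metric.mem_ball] using hbn))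
    have hbγ' : -b ∈ γ := interior_subset (hrball (by simpa [Metric.mem_ball] using hbn))
    have : b ∈ γ ∩ (-γ) := ⟨hbγ, by simpa using hbγ'⟩
    rw [hproper] at this
    exact hb0 this
  have hvγ : v ∈ γ := interior_subset hv
  have huv : 0 < u v := lt_of_lt_of_le (mul_pos (by linarith) (norm_pos_iff.mpr hv0)) (key v hvγ)
  intro x
  constructor
  · intro hx
    ext z
    simp only [Set.mem_setOf_eq, Set.mem_empty_iff_false, iff_false, not_and]
    intro hz huz
    exact absurd (huz ▸ hnonneg z hz) (not_le.mpr hx)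
  · intro hx
    refine ⟨?_, ?_, ?_⟩
    · -- nonempty
      rcases eq_or_lt_of_le hx with rfl | hx'
      · exact ⟨0, hzero, by simp⟩
      · refine ⟨(x / u v) • v, ?_, ?_⟩
        · exact hsmul _ (div_pos hx' huv) ⟨v, hvγ, rfl⟩
        · simp only [map_smul, smul_eq_mul]
          field_simp
    · -- compact
      have hcl : IsClosed {z ∈ γ | u z = x} :=
        hclosed.inter (isClosed_eq u.continuous continuous_const)
      have hbd : Bornology.IsBounded {z ∈ γ | u z = x} := by
        rw [isBounded_iff_forall_norm_le]
        refine ⟨2 * x / ε, ?_⟩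
        rintro z ⟨hz, huz⟩
        have := key z hz
        rw [huz] at this
        rw [le_div_iff₀ (by linarith : (0:ℝ) < ε)]
        nlinarith
      exact Metric.isCompact_of_isClosed_isBounded hcl hbd
    · -- convex
      intro z hz w hw a b ha hb hab
      refine ⟨hconv hz.1 hw.1 ha hb hab, ?_⟩
      simp only [map_add, map_smul, smul_eq_mul, hz.2, hw.2]
      nlinarith [hz.2, hw.2]
end

section
/- Let V be a finite-dimensional real normed vector space and γ ⊆ V a closed cone (0 ∈ γ and t • γ ⊆ γ for every real t > 0, γ closed). If a continuous linear functional u on V belongs to the topological boundary ∂γ° of the polar cone γ° in V*, then there exists x ∈ γ with x ≠ 0 and u(x) = 0; consequently ker(u) ∩ γ contains the half-line ℝ_{≥0} • x. -/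
open Pointwise

/-- if `γ` is a closed cone in a finite-dimensional real normed vector space
and `u` belongs to the topological boundary of the polar cone `γ°` in the continuous dual
(with the operator norm), then there is a nonzero `x ∈ γ` with `u x = 0`; consequently
`ker u ∩ γ` contains the half-line `ℝ≥0 • x`. -/
theorem boundary_polar_kills_ray
    {V : Type*} [NormedAddCommGroup V] [NormedSpace ℝ V] [FiniteDimensional ℝ V]
    (γ : Set V) (hzero : (0 : V) ∈ γ)
    (hsmul : ∀ t : ℝ, 0 < t → t • γ ⊆ γ)
    (hclosed : IsClosed γ)
    (u : V →L[ℝ] ℝ)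
    (hu : u ∈ frontier {w : V →L[ℝ] ℝ | ∀ x ∈ γ, 0 ≤ w x}) :
    ∃ x ∈ γ, x ≠ 0 ∧ u x = 0 ∧
      ∀ t : ℝ, 0 ≤ t → t • x ∈ {z : V | u z = 0} ∩ γ := by
  set S : Set (V →L[ℝ] ℝ) := {w : V →L[ℝ] ℝ | ∀ x ∈ γ, 0 ≤ w x} with hS
  have hSclosed : IsClosed S := by
    have : S = ⋂ x ∈ γ, {w : V →L[ℝ] ℝ | 0 ≤ w x} := by
      ext w; simp [hS, Set.mem_iInter]
    rw [this]
    refine isClosed_biInter fun x _ => isClosed_le continuous_const ?_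
    exact (ContinuousLinearMap.apply ℝ ℝ x).continuous
  have huS : u ∈ S := by
    have := hu.1
    rwa [hSclosed.closure_eq] at this
  have hnotint := hu.2
  rw [mem_interior_iff_mem_nhds, Metric.mem_nhds_iff] at hnotint
  push_neg at hnotint
  have hw : ∀ n : ℕ, ∃ w : V →L[ℝ] ℝ, dist w u < ((n : ℝ) + 1)⁻¹ ∧ ∃ x ∈ γ, w x < 0 := by
    intro n
    obtain ⟨w, hwball, hwnot⟩ := Set.not_subset.1 (hnotint (((n : ℝ) + 1)⁻¹) (by positivity))
    refine ⟨w, by simpa [Metric.mem_ball] using hwball, ?_⟩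
    simp only [hS, Set.mem_setOf_eq, not_forall] at hwnot
    obtain ⟨x, hx, hlt⟩ := hwnot
    exact ⟨x, hx, lt_of_not_ge hlt⟩
  choose w hwdist x hxγ hwx using hw
  have hxne : ∀ n, x n ≠ 0 := by
    intro n h
    have := hwx n
    rw [h] at this
    simp at this
  set y : ℕ → V := fun n => (‖x n‖)⁻¹ • x n with hy
  have hyγ : ∀ n, y n ∈ γ := by
    intro n
    exact hsmul _ (inv_pos.2 (norm_pos_iff.2 (hxne n))) (Set.smul_mem_smul_set (hxγ n))
  have hysph : ∀ n, y n ∈ Metric.sphere (0 : V) 1 := by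
    intro n
    simp [hy, norm_smul, inv_mul_cancel₀ (norm_ne_zero_iff.2 (hxne n))]
  have hwy : ∀ n, w n (y n) < 0 := by
    intro n
    have : w n (y n) = (‖x n‖)⁻¹ * w n (x n) := by simp [hy]
    rw [this]
    exact mul_neg_of_pos_of_neg (inv_pos.2 (norm_pos_iff.2 (hxne n))) (hwx n)
  obtain ⟨z, hzsph, φ, hφ, hconv⟩ :=
    (isCompact_sphere (0 : V) 1).tendsto_subseq hysph
  have hzγ : z ∈ γ := hclosed.mem_of_tendsto hconv
    (Filter.Eventually.of_forall fun n => hyγ (φ n))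
  have hzne : z ≠ 0 := by
    intro h
    rw [h] at hzsph
    simp at hzsph
  -- u z ≤ 0
  have hule : ∀ n, u (y (φ n)) ≤ ((φ n : ℝ) + 1)⁻¹ := by
    intro n
    have h1 : u (y (φ n)) ≤ (u - w (φ n)) (y (φ n)) := by
      have := hwy (φ n)
      simp only [ContinuousLinearMap.sub_apply]
      linarith
    have h2 : (u - w (φ n)) (y (φ n)) ≤ ‖u - w (φ n)‖ := by
      calc (u - w (φ n)) (y (φ n)) ≤ ‖(u - w (φ n)) (y (φ n))‖ := le_abs_self _
        _ ≤ ‖u - w (φ n)‖ * ‖y (φ n)‖ := (u - w (φ n)).le_opNorm _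
        _ = ‖u - w (φ n)‖ := by
            rw [mem_sphere_zero_iff_norm.1 (hysph (φ n)), mul_one]
    have h3 : ‖u - w (φ n)‖ ≤ ((φ n : ℝ) + 1)⁻¹ := by
      have := hwdist (φ n)
      rw [dist_eq_norm] at this
      rw [← norm_neg]
      simpa [neg_sub] using this.le
    linarith
  have htend1 : Filter.Tendsto (fun n => u (y (φ n))) Filter.atTop (nhds (u z)) :=
    (u.continuous.tendsto z).comp hconv
  have htend2 : Filter.Tendsto (fun n => ((φ n : ℝ) + 1)⁻¹) Filter.atTop (nhds 0) := by
    have h0 : Filter.Tendsto (fun n : ℕ => ((n : ℝ) + 1)⁻¹) Filter.atTop (nhds 0) :=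
      tendsto_one_div_add_atTop_nhds_zero_nat.congr (by simp [one_div])
    exact h0.comp hφ.tendsto_atTop
  have huz_le : u z ≤ 0 :=
    le_of_tendsto_of_tendsto' htend1 htend2 hule
  have huz : u z = 0 := le_antisymm huz_le (huS z hzγ)
  refine ⟨z, hzγ, hzne, huz, fun t ht => ?_⟩
  rcases eq_or_lt_of_le ht with h | h
  · simp [← h, hzero]
  · constructor
    · simp [huz]
    · exact hsmul t h (Set.smul_mem_smul_set hzγ)
end

section
/- Fix an integer n ≥ 1, h ∈ ℝⁿ with h_i > 0 for every i, and real numbers a < b, and let γ = (−∞,0]ⁿ. For j = 1,…,n set R_j := {x ∈ ℝⁿ : x_i < b·h_i for all i} ∩ {x ∈ ℝⁿ : x_j > a·h_j}, and for a nonempty subset I ⊆ {1,…,n} set R_I := ⋂_{i∈I} R_i. Then each R_I is a nonempty open convex subset of ℝⁿ (it contains the open box ∏_i (a·h_i, b·h_i)), and R_I + γ = {x ∈ ℝⁿ : x_i < b·h_i for all i}; in particular R_I + γ = R_J + γ for all nonempty subsets I, J of {1,…,n}. -/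
open Pointwise

/-- The set `R_j = {x : x_i < b h_i for all i} ∩ {x : x_j > a h_j}`. -/
def Rset (n : ℕ) (h : Fin n → ℝ) (a b : ℝ) (j : Fin n) : Set (Fin n → ℝ) :=
  {x : Fin n → ℝ | ∀ i, x i < b * h i} ∩ {x : Fin n → ℝ | a * h j < x j}

lemma box_subset (n : ℕ) (h : Fin n → ℝ) (a b : ℝ) (I : Set (Fin n)) :
    Set.univ.pi (fun i => Set.Ioo (a * h i) (b * h i)) ⊆ ⋂ i ∈ I, Rset n h a b i := by
  intro x hx
  simp only [Set.mem_univ_pi, Set.mem_Ioo] at hx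
  refine Set.mem_biInter fun j hj => ⟨fun i => (hx i).2, (hx j).1⟩

lemma key (n : ℕ) (h : Fin n → ℝ) (hpos : ∀ i, 0 < h i) (a b : ℝ) (hab : a < b)
    (I : Set (Fin n)) (hI : I.Nonempty) :
    (⋂ i ∈ I, Rset n h a b i) + {z : Fin n → ℝ | ∀ i, z i ≤ 0}
      = {x : Fin n → ℝ | ∀ i, x i < b * h i} := by
  ext x
  constructor
  · rintro ⟨r, hr, z, hz, rfl⟩
    obtain ⟨j, hj⟩ := hI
    have hr' := Set.mem_iInter₂.mp hr j hj
    intro i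
    calc r i + z i ≤ r i + 0 := by linarith [hz i]
    _ < b * h i := by simpa using hr'.1 i
  · intro hx
    set m : Fin n → ℝ := fun i => ((a + b) / 2) * h i with hm
    have hma : ∀ i, a * h i < m i := fun i => by
      have := hpos i; simp only [hm]; nlinarith
    have hmb : ∀ i, m i < b * h i := fun i => by
      have := hpos i; simp only [hm]; nlinarith
    refine ⟨fun i => max (x i) (m i), ?_, fun i => x i - max (x i) (m i), ?_, ?_⟩
    · refine Set.mem_biInter fun j hj => ⟨fun i => max_lt (hx i) (hmb i), ?_⟩
      exact lt_of_lt_of_le (hma j) (le_max_right _ _)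
    · intro i; simp [le_max_left]
    · funext i; simp

/-- for `h` with positive coordinates and `a < b`, each `R_I = ⋂_{i ∈ I} R_i`
(for `I ⊆ {1,…,n}` nonempty) contains the open box `∏_i (a h_i, b h_i)`, is a nonempty open
convex subset of `ℝⁿ`, and satisfies `R_I + γ = {x : x_i < b h_i for all i}` with
`γ = (-∞,0]ⁿ`; in particular `R_I + γ = R_J + γ` for all nonempty `I, J`. -/
theorem Rset_inter_properties
    (n : ℕ) (hn : 1 ≤ n) (h : Fin n → ℝ) (hpos : ∀ i, 0 < h i)
    (a b : ℝ) (hab : a < b) :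
    (∀ I : Set (Fin n), I.Nonempty →
      (Set.univ.pi (fun i => Set.Ioo (a * h i) (b * h i)) ⊆ ⋂ i ∈ I, Rset n h a b i) ∧
      (⋂ i ∈ I, Rset n h a b i).Nonempty ∧
      IsOpen (⋂ i ∈ I, Rset n h a b i) ∧
      Convex ℝ (⋂ i ∈ I, Rset n h a b i) ∧
      ((⋂ i ∈ I, Rset n h a b i) + {z : Fin n → ℝ | ∀ i, z i ≤ 0}
        = {x : Fin n → ℝ | ∀ i, x i < b * h i})) ∧
    (∀ I J : Set (Fin n), I.Nonempty → J.Nonempty →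
      (⋂ i ∈ I, Rset n h a b i) + {z : Fin n → ℝ | ∀ i, z i ≤ 0}
        = (⋂ i ∈ J, Rset n h a b i) + {z : Fin n → ℝ | ∀ i, z i ≤ 0}) := by
  have hopen : ∀ j, IsOpen (Rset n h a b j) := by
    intro j
    refine IsOpen.inter ?_ (isOpen_lt continuous_const (continuous_apply j))
    have : {x : Fin n → ℝ | ∀ i, x i < b * h i} = ⋂ i, {x : Fin n → ℝ | x i < b * h i} := by
      ext x; simp
    rw [this]
    exact isOpen_iInter_of_finite fun i => isOpen_lt (continuous_apply i) continuous_const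
  have hconv : ∀ j, Convex ℝ (Rset n h a b j) := by
    intro j
    refine Convex.inter ?_ (convex_halfSpace_gt ⟨fun x y => rfl, fun c x => rfl⟩ _)
    have : {x : Fin n → ℝ | ∀ i, x i < b * h i} = ⋂ i, {x : Fin n → ℝ | x i < b * h i} := by
      ext x; simp
    rw [this]
    exact convex_iInter fun i => convex_halfSpace_lt ⟨fun x y => rfl, fun c x => rfl⟩ _
  refine ⟨fun I hI => ⟨box_subset n h a b I, ?_, ?_, ?_, key n h hpos a b hab I hI⟩,
    fun I J hI hJ => by rw [key n h hpos a b hab I hI, key n h hpos a b hab J hJ]⟩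
  · refine ⟨fun i => ((a + b) / 2) * h i, box_subset n h a b I ?_⟩
    simp only [Set.mem_univ_pi, Set.mem_Ioo]
    intro i
    have := hpos i
    constructor <;> nlinarith
  · exact (Set.toFinite I).isOpen_biInter fun i _ => hopen i
  · exact convex_iInter₂ fun i _ => hconv i
end

section
/- In ℝ² let X = {t • (−1, 1) : t ∈ [0,1]}, and for s ≥ 2 let Y_s be the convex hull of X ∪ {(0, s)}. With γ = (−∞,0]² and γ^a = [0,∞)², one has the equality of Minkowski sums Y_s + γ^a = X + γ^a. -/
open Pointwise

/-- in `ℝ²`, let `X = {t • (-1, 1) : t ∈ [0,1]}` and, for `s ≥ 2`, let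
`Y_s = conv(X ∪ {(0, s)})`. With `γ^a = [0,∞)²`, one has `Y_s + γ^a = X + γ^a`. -/
theorem convexHull_add_orthant_eq
    (s : ℝ) (hs : 2 ≤ s) :
    convexHull ℝ (((fun t : ℝ => t • ((-1 : ℝ), (1 : ℝ))) '' Set.Icc (0 : ℝ) 1)
        ∪ {((0 : ℝ), s)})
      + {p : ℝ × ℝ | 0 ≤ p.1 ∧ 0 ≤ p.2}
    = ((fun t : ℝ => t • ((-1 : ℝ), (1 : ℝ))) '' Set.Icc (0 : ℝ) 1)
      + {p : ℝ × ℝ | 0 ≤ p.1 ∧ 0 ≤ p.2} := by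
  set C : Set (ℝ × ℝ) := {p : ℝ × ℝ | 0 ≤ p.1 ∧ 0 ≤ p.2} with hC
  set X : Set (ℝ × ℝ) := (fun t : ℝ => t • ((-1 : ℝ), (1 : ℝ))) '' Set.Icc (0 : ℝ) 1 with hX
  have hCconv : Convex ℝ C := by
    have : C = Set.Ici (0 : ℝ) ×ˢ Set.Ici (0 : ℝ) := rfl
    rw [this]
    exact (convex_Ici 0).prod (convex_Ici 0)
  have hXseg : X = segment ℝ ((0 : ℝ) , (0 : ℝ)) ((-1 : ℝ), (1 : ℝ)) := by
    rw [segment_eq_image]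
    simp [hX]
  have hXconv : Convex ℝ X := hXseg ▸ convex_segment _ _
  have hCC : C + C ⊆ C := by
    rintro p ⟨a, ⟨ha1, ha2⟩, b, ⟨hb1, hb2⟩, rfl⟩
    exact ⟨add_nonneg ha1 hb1, add_nonneg ha2 hb2⟩
  apply Set.Subset.antisymm
  · have h1 : convexHull ℝ (X ∪ {((0 : ℝ), s)}) ⊆ X + C := by
      apply convexHull_min _ (hXconv.add hCconv)
      rintro p (hp | rfl)
      · exact ⟨p, hp, 0, ⟨le_refl 0, le_refl 0⟩, add_zero p⟩
      · refine ⟨((-1 : ℝ), (1 : ℝ)), ⟨1, ⟨zero_le_one, le_refl 1⟩, by norm_num⟩,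
          ((1 : ℝ), s - 1), ⟨by norm_num, show (0:ℝ) ≤ s - 1 by linarith⟩, by
            simp [Prod.ext_iff]⟩
    calc convexHull ℝ (X ∪ {((0 : ℝ), s)}) + C ⊆ (X + C) + C :=
          Set.add_subset_add_right h1
      _ = X + (C + C) := add_assoc _ _ _
      _ ⊆ X + C := Set.add_subset_add_left hCC
  · exact Set.add_subset_add_right
      (Set.Subset.trans Set.subset_union_left (subset_convexHull ℝ _))
end
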